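/- Let f_T : ℝ → [0, ∞) be an even probability density, let f_D : ℝ → [0, ∞) be a probability density supported in [0, ∞), and let g : ℝ → [0, 1] be measurable. For ξ ∈ ℝ define I(ξ) = ∫_ℝ ∫_{−∞}^{0} ∫_{0}^{∞} g(−y)·g(x)·p(ξ − ψ − y − x)·f_D(x)·f_D(−y)·f_T(ψ) dx dy dψ. Then I(ξ) = −I(−ξ) for all ξ ∈ ℝ, and in particular I(0) = 0. -/
import Mathlib


open MeasureTheory Set

/-- Reflection of a set integral over `Ioi 0` to one over `Iio 0`. -/
lemma reflect_Ioi_Iio (f : ℝ → ℝ) :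
    (∫ x in Set.Ioi (0 : ℝ), f x) = ∫ x in Set.Iio (0 : ℝ), f (-x) := by
  rw [← integral_Iic_eq_integral_Iio, integral_comp_neg_Iic]
  norm_num

/-- Reflection of a set integral over `Iio 0` to one over `Ioi 0`. -/
lemma reflect_Iio_Ioi (f : ℝ → ℝ) :
    (∫ x in Set.Iio (0 : ℝ), f x) = ∫ x in Set.Ioi (0 : ℝ), f (-x) := by
  rw [reflect_Ioi_Iio]
  simp

/-- Antisymmetry of the delay-compensated expectation: for an
even density `f_T`, a density `f_D` supported in `[0, ∞)`, and `g : ℝ → [0,1]`,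
the function
`I(ξ) = ∫∫∫ g(-y) g(x) p(ξ - ψ - y - x) f_D(x) f_D(-y) f_T(ψ) dx dy dψ`
satisfies `I(ξ) = -I(-ξ)` for all `ξ`, and in particular `I(0) = 0`. -/
theorem delay_compensated_expectation_antisymmetric
    (τnz : ℝ) (hτnz : 0 < τnz) (q p : ℝ → ℝ)
    (hq_pos : ∀ t ∈ Set.Ioo (-τnz) 0, 0 < q t)
    (hq_zero : ∀ t, t ∉ Set.Ioo (-τnz) 0 → q t = 0)
    (hq_sup : (⨆ t, |q t|) = 1)
    (hq_uc : UniformContinuousOn q (Set.Ioo (-τnz) 0))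
    (hp_neg : ∀ t ∈ Set.Ioo (-τnz) 0, p t = q t)
    (hp_pos : ∀ t ∈ Set.Ioo 0 τnz, p t = -q (-t))
    (hp_zero : p 0 = 0)
    (hp_out : ∀ t, t ≤ -τnz ∨ τnz ≤ t → p t = 0)
    (hp_meas : Measurable p)
    (fT fD g : ℝ → ℝ)
    (hfT_meas : Measurable fT) (hfT_nonneg : ∀ x, 0 ≤ fT x)
    (hfT_int : ∫ x, fT x = 1) (hfT_even : ∀ x, fT (-x) = fT x)
    (hfD_meas : Measurable fD) (hfD_nonneg : ∀ x, 0 ≤ fD x)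
    (hfD_int : ∫ x, fD x = 1) (hfD_supp : ∀ x, x < 0 → fD x = 0)
    (hg_meas : Measurable g) (hg_range : ∀ x, g x ∈ Set.Icc (0 : ℝ) 1)
    (I : ℝ → ℝ)
    (hI : ∀ ξ, I ξ = ∫ ψ, ∫ y in Set.Iio (0 : ℝ), ∫ x in Set.Ioi (0 : ℝ),
      g (-y) * g x * p (ξ - ψ - y - x) * fD x * fD (-y) * fT ψ) :
    (∀ ξ : ℝ, I ξ = -I (-ξ)) ∧ I 0 = 0 := by
  -- `p` is odd
  have hp_odd : ∀ t, p (-t) = -p t := by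
    intro t
    by_cases hout : t ≤ -τnz ∨ τnz ≤ t
    · have hout' : -t ≤ -τnz ∨ τnz ≤ -t := by
        rcases hout with h | h
        · right; linarith
        · left; linarith
      rw [hp_out t hout, hp_out (-t) hout', neg_zero]
    · push_neg at hout
      obtain ⟨h1, h2⟩ := hout
      rcases lt_trichotomy t 0 with ht | ht | ht
      · rw [hp_neg t ⟨h1, ht⟩, hp_pos (-t) ⟨by linarith, by linarith⟩, neg_neg]
      · simp [ht, hp_zero]
      · rw [hp_pos t ⟨ht, h2⟩, hp_neg (-t) ⟨by linarith, by linarith⟩, neg_neg]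
  -- `|q| ≤ 1`, hence `|p| ≤ 1`
  have hq_bdd : BddAbove (Set.range fun t => |q t|) := by
    by_contra h
    rw [Real.iSup_of_not_bddAbove h] at hq_sup
    norm_num at hq_sup
  have hq_le : ∀ t, |q t| ≤ 1 := fun t => hq_sup ▸ le_ciSup hq_bdd t
  have hp_le : ∀ t, |p t| ≤ 1 := by
    intro t
    by_cases hout : t ≤ -τnz ∨ τnz ≤ t
    · rw [hp_out t hout]; norm_num
    · push_neg at hout
      obtain ⟨h1, h2⟩ := hout
      rcases lt_trichotomy t 0 with ht | ht | ht
      · rw [hp_neg t ⟨h1, ht⟩]; exact hq_le t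
      · simp [ht, hp_zero]
      · rw [hp_pos t ⟨ht, h2⟩, abs_neg]; exact hq_le (-t)
  -- integrability of `fD`
  have hfD_integrable : Integrable fD := by
    by_contra h
    rw [integral_undef h] at hfD_int
    norm_num at hfD_int
  -- The inner double integral
  set H : ℝ → ℝ → ℝ → ℝ := fun u y x => g (-y) * g x * p (u - y - x) * fD x * fD (-y)
    with hH
  set K : ℝ → ℝ := fun u => ∫ y in Set.Iio (0 : ℝ), ∫ x in Set.Ioi (0 : ℝ), H u y x
    with hK
  -- Fubini for `H u` over `Ioi 0 ×ˢ Iio 0`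
  have hHmeas : ∀ u, Measurable (fun z : ℝ × ℝ => H u z.2 z.1) := by
    intro u
    apply Measurable.mul
    apply Measurable.mul
    apply Measurable.mul
    apply Measurable.mul
    · exact (hg_meas.comp measurable_snd.neg)
    · exact hg_meas.comp measurable_fst
    · exact hp_meas.comp ((measurable_const.sub measurable_snd).sub measurable_fst)
    · exact hfD_meas.comp measurable_fst
    · exact hfD_meas.comp measurable_snd.neg
  have hHint : ∀ u, Integrable (fun z : ℝ × ℝ => H u z.2 z.1)
      ((volume.restrict (Set.Ioi (0:ℝ))).prod (volume.restrict (Set.Iio (0:ℝ)))) := by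
    intro u
    have hdom : Integrable (fun z : ℝ × ℝ => fD z.1 * fD (-z.2))
        ((volume.restrict (Set.Ioi (0:ℝ))).prod (volume.restrict (Set.Iio (0:ℝ)))) := by
      exact Integrable.mul_prod (hfD_integrable.restrict)
        ((hfD_integrable.comp_neg).restrict)
    refine hdom.mono ((hHmeas u).aestronglyMeasurable) ?_
    filter_upwards with z
    have h1 : 0 ≤ g (-z.2) ∧ g (-z.2) ≤ 1 := hg_range (-z.2)
    have h2 : 0 ≤ g z.1 ∧ g z.1 ≤ 1 := hg_range z.1
    have h3 := hp_le (u - z.2 - z.1)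
    have h4 := hfD_nonneg z.1
    have h5 := hfD_nonneg (-z.2)
    simp only [hH, Real.norm_eq_abs]
    rw [abs_mul, abs_mul, abs_mul, abs_mul, abs_of_nonneg h4, abs_of_nonneg h5,
      abs_of_nonneg h1.1, abs_of_nonneg h2.1, abs_of_nonneg (mul_nonneg h4 h5)]
    calc g (-z.2) * g z.1 * |p (u - z.2 - z.1)| * fD z.1 * fD (-z.2)
        ≤ 1 * 1 * 1 * fD z.1 * fD (-z.2) := by
          gcongr <;> first
            | exact h1.1 | exact h1.2 | exact h2.1 | exact h2.2 | exact h3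
            | exact abs_nonneg _ | positivity
      _ = fD z.1 * fD (-z.2) := by ring
  -- antisymmetry of K
  have hK_odd : ∀ u, K (-u) = -K u := by
    intro u
    have step1 : K (-u) =
        ∫ y in Set.Ioi (0:ℝ), ∫ x in Set.Iio (0:ℝ), -(H u x y) := by
      simp only [hK]
      rw [reflect_Iio_Ioi (fun y => ∫ x in Set.Ioi (0:ℝ), H (-u) y x)]
      refine setIntegral_congr_fun measurableSet_Ioi (fun y _ => ?_)
      rw [reflect_Ioi_Iio (fun x => H (-u) (-y) x)]
      refine setIntegral_congr_fun measurableSet_Iio (fun x _ => ?_)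
      simp only [hH]
      have : -u - -y - -x = -(u - x - y) := by ring
      rw [this, hp_odd (u - x - y)]
      ring
    rw [step1]
    rw [show (∫ y in Set.Ioi (0:ℝ), ∫ x in Set.Iio (0:ℝ), -(H u x y))
        = -∫ y in Set.Ioi (0:ℝ), ∫ x in Set.Iio (0:ℝ), H u x y by
      rw [← integral_neg]
      exact setIntegral_congr_fun measurableSet_Ioi (fun y _ => by rw [integral_neg])]
    rw [integral_integral_swap (hHint u)]
  -- I ξ = ∫ψ K(ξ - ψ) * fT ψ
  have hI' : ∀ ξ, I ξ = ∫ ψ, K (ξ - ψ) * fT ψ := by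
    intro ξ
    rw [hI ξ]
    refine integral_congr_ae (Filter.Eventually.of_forall fun ψ => ?_)
    simp only [hK]
    rw [← integral_mul_const]
    refine setIntegral_congr_fun measurableSet_Iio (fun y _ => ?_)
    rw [← integral_mul_const]
  have main : ∀ ξ : ℝ, I ξ = -I (-ξ) := by
    intro ξ
    rw [hI' ξ, hI' (-ξ)]
    have : (∫ ψ, K (-ξ - ψ) * fT ψ) = ∫ ψ, K (-ξ - -ψ) * fT (-ψ) := by
      exact (integral_neg_eq_self _ _).symm
    rw [this]
    rw [← integral_neg]
    congr 1
    ext ψ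
    have h1 : -ξ - -ψ = -(ξ - ψ) := by ring
    rw [h1, hK_odd (ξ - ψ), hfT_even ψ]
    ring
  refine ⟨main, ?_⟩
  have := main 0
  rw [neg_zero] at this
  linarith
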